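/- Sequence form of Burbea's inequality: let k ≥ 2 be an integer and (a_j)_{j≥0} a square-summable sequence of complex numbers. Then ∑_{j=0}^∞ (1/C(j+k-1,j)) · |∑_{j_1+⋯+j_k=j} a_{j_1}⋯a_{j_k}|² ≤ (∑_{j=0}^∞ |a_j|²)^k. -/

import Mathlib

/-- The number of `k`-tuples of naturals summing to `j` is `C(j+k-1, j)`. -/
lemma card_antidiagonalTuple' (k j : ℕ) :
    (Finset.Nat.antidiagonalTuple k j).card = (j + k - 1).choose j := by
  have e : {t : Fin k → ℕ // t ∈ Finset.Nat.antidiagonalTuple k j} ≃ Sym (Fin k) j :=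
    (Equiv.subtypeEquivRight fun t => Finset.Nat.mem_antidiagonalTuple).trans
      (Sym.equivNatSumOfFintype (Fin k) j).symm
  have h1 : (Finset.Nat.antidiagonalTuple k j).card = Fintype.card (Sym (Fin k) j) := by
    rw [← Fintype.card_coe]
    exact Fintype.card_congr e
  rw [h1, Sym.card_sym_eq_choose, Fintype.card_fin]
  congr 1
  omega

/-- The `m`-fold product of a summable nonnegative series. -/
lemma hasSum_pi_prod {b : ℕ → ℝ} (hb : Summable b) (hb0 : ∀ n, 0 ≤ b n) (m : ℕ) :
    HasSum (fun t : Fin m → ℕ => ∏ i, b (t i)) ((∑' n, b n) ^ m) := by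
  induction m with
  | zero =>
    have h := hasSum_unique (fun t : Fin 0 → ℕ => ∏ i, b (t i))
    simpa using h
  | succ m ih =>
    have hnn1 : (0 : ℕ → ℝ) ≤ b := fun n => hb0 n
    have hnn2 : (0 : (Fin m → ℕ) → ℝ) ≤ fun t => ∏ i, b (t i) :=
      fun t => Finset.prod_nonneg fun i _ => hb0 _
    have hsum := Summable.mul_of_nonneg hb ih.summable hnn1 hnn2
    have hmul := hb.hasSum.mul ih hsum
    have he : HasSum ((fun t : Fin (m + 1) → ℕ => ∏ i, b (t i)) ∘
        (Fin.consEquiv fun _ => ℕ)) ((∑' n, b n) * (∑' n, b n) ^ m) := by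
      convert hmul using 1
      · rfl
      funext p
      simp [Fin.consEquiv, Fin.prod_univ_succ]
    have := (Equiv.hasSum_iff (Fin.consEquiv fun _ : Fin (m + 1) => ℕ)).mp he
    rw [pow_succ]
    rw [mul_comm] at this
    exact this

/-- Sequence form of Burbea's inequality: for an integer `k ≥ 2` and a square-summable
complex sequence `(a_j)`,
`∑_j (1/C(j+k-1,j)) |∑_{j₁+⋯+j_k=j} a_{j₁}⋯a_{j_k}|² ≤ (∑_j |a_j|²)^k`. -/
theorem burbea_sequence (k : ℕ) (hk : 2 ≤ k) (a : ℕ → ℂ)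
    (ha : Summable fun j => ‖a j‖ ^ 2) :
    ∑' j : ℕ, (1 / ((j + k - 1).choose j : ℝ)) *
        ‖∑ t ∈ Finset.Nat.antidiagonalTuple k j, ∏ i : Fin k, a (t i)‖ ^ 2
      ≤ (∑' j : ℕ, ‖a j‖ ^ 2) ^ k := by
  set b : ℕ → ℝ := fun j => ‖a j‖ ^ 2 with hbdef
  have hb0 : ∀ n, 0 ≤ b n := fun n => by positivity
  set F : ℕ → ℝ := fun j => ∑ t ∈ Finset.Nat.antidiagonalTuple k j, ∏ i, b (t i)
    with hFdef
  -- F has sum (∑' b)^k by summing the k-fold product fiberwise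
  have hFsum : HasSum F ((∑' n, b n) ^ k) := by
    have h := (hasSum_pi_prod ha hb0 k).tsum_fiberwise (fun t => ∑ i, t i)
    convert h using 2 with j
    · rfl
    have hset : ((fun t : Fin k → ℕ => ∑ i, t i) ⁻¹' {j})
        = ↑(Finset.Nat.antidiagonalTuple k j) := by
      ext t
      simp [Finset.Nat.mem_antidiagonalTuple]
    rw [hset]
    exact (Finset.tsum_subtype' _ _).symm
  -- termwise bound via Cauchy–Schwarz
  have hterm : ∀ j : ℕ, (1 / ((j + k - 1).choose j : ℝ)) *
      ‖∑ t ∈ Finset.Nat.antidiagonalTuple k j, ∏ i : Fin k, a (t i)‖ ^ 2 ≤ F j := by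
    intro j
    set A := Finset.Nat.antidiagonalTuple k j with hA
    have hC : (0 : ℝ) < ((j + k - 1).choose j : ℝ) := by
      have : 0 < (j + k - 1).choose j := Nat.choose_pos (by omega)
      exact_mod_cast this
    have h1 : ‖∑ t ∈ A, ∏ i : Fin k, a (t i)‖ ^ 2
        ≤ (∑ t ∈ A, ‖∏ i : Fin k, a (t i)‖) ^ 2 := by
      apply pow_le_pow_left₀ (norm_nonneg _)
      exact norm_sum_le _ _
    have h2 : (∑ t ∈ A, ‖∏ i : Fin k, a (t i)‖) ^ 2
        ≤ (A.card : ℝ) * ∑ t ∈ A, ‖∏ i : Fin k, a (t i)‖ ^ 2 :=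
      sq_sum_le_card_mul_sum_sq
    have h3 : ∑ t ∈ A, ‖∏ i : Fin k, a (t i)‖ ^ 2 = F j := by
      apply Finset.sum_congr rfl
      intro t _
      rw [norm_prod, ← Finset.prod_pow]
    have hcard : (A.card : ℝ) = ((j + k - 1).choose j : ℝ) := by
      exact_mod_cast congrArg Nat.cast (card_antidiagonalTuple' k j)
    calc (1 / ((j + k - 1).choose j : ℝ)) * ‖∑ t ∈ A, ∏ i : Fin k, a (t i)‖ ^ 2
        ≤ (1 / ((j + k - 1).choose j : ℝ)) *
            (((j + k - 1).choose j : ℝ) * F j) := by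
          apply mul_le_mul_of_nonneg_left _ (by positivity)
          calc ‖∑ t ∈ A, ∏ i : Fin k, a (t i)‖ ^ 2
              ≤ (A.card : ℝ) * ∑ t ∈ A, ‖∏ i : Fin k, a (t i)‖ ^ 2 := h1.trans h2
            _ = ((j + k - 1).choose j : ℝ) * F j := by rw [hcard, h3]
      _ = F j := by field_simp
  have hnonneg : ∀ j : ℕ, 0 ≤ (1 / ((j + k - 1).choose j : ℝ)) *
      ‖∑ t ∈ Finset.Nat.antidiagonalTuple k j, ∏ i : Fin k, a (t i)‖ ^ 2 := by
    intro j; positivity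
  have hLsum : Summable fun j : ℕ => (1 / ((j + k - 1).choose j : ℝ)) *
      ‖∑ t ∈ Finset.Nat.antidiagonalTuple k j, ∏ i : Fin k, a (t i)‖ ^ 2 :=
    Summable.of_nonneg_of_le hnonneg hterm hFsum.summable
  calc ∑' j : ℕ, (1 / ((j + k - 1).choose j : ℝ)) *
        ‖∑ t ∈ Finset.Nat.antidiagonalTuple k j, ∏ i : Fin k, a (t i)‖ ^ 2
      ≤ ∑' j, F j := Summable.tsum_le_tsum hterm hLsum hFsum.summable
    _ = (∑' n, b n) ^ k := hFsum.tsum_eq
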